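/- (Theorem 1, LU-CBTB for a fixed set of test points.) Suppose the estimator g satisfies ∫ ‖g‖ f_m dμ < ∞ for every m = 0,…,P, ∫ ‖g − θ_0‖² f_0 dμ < ∞, and the pointwise C-unbiasedness conditions U_mᵀ W (∫ (g − θ_m) f_m dμ) = 0 for every m = 0,…,P. If the matrix D is invertible, then the weighted mean-squared error satisfies ∫ (g − θ_0)ᵀ W (g − θ_0) f_0 dμ ≥ tᵀ D⁻¹ t. -/

import Mathlib

open MeasureTheory Matrix

private lemma sumdot {M' : ℕ} {ι : Type*} (s : Finset ι) (v : ι → Fin M' → ℝ) (w : Fin M' → ℝ) :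
    (∑ i ∈ s, v i) ⬝ᵥ w = ∑ i ∈ s, v i ⬝ᵥ w := by
  simp only [dotProduct, Finset.sum_apply, Finset.sum_mul]
  exact Finset.sum_comm

private lemma dotsymm {M' : ℕ} (W : Matrix (Fin M') (Fin M') ℝ) (hWs : Wᵀ = W)
    (u v : Fin M' → ℝ) : u ⬝ᵥ W *ᵥ v = v ⬝ᵥ W *ᵥ u := by
  rw [dotProduct_mulVec]
  rw [show u ᵥ* W = W *ᵥ u from by rw [← hWs, vecMul_transpose, hWs]]
  exact dotProduct_comm _ _

private lemma dotadj {m n : ℕ} (A : Matrix (Fin m) (Fin n) ℝ) (x : Fin n → ℝ) (w : Fin m → ℝ) :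
    (A *ᵥ x) ⬝ᵥ w = x ⬝ᵥ (Aᵀ *ᵥ w) := by
  rw [dotProduct_mulVec, vecMul_transpose]

private lemma expand_quad {M' P' : ℕ} (W : Matrix (Fin M') (Fin M') ℝ) (hWs : Wᵀ = W)
    (e : Fin M' → ℝ) (c : Fin P' → Fin M' → ℝ) (s : Fin P' → ℝ) :
    (e - ∑ m, s m • c m) ⬝ᵥ W *ᵥ (e - ∑ m, s m • c m)
      = e ⬝ᵥ W *ᵥ e - 2 * ∑ m, s m * (c m ⬝ᵥ W *ᵥ e)
        + ∑ m, ∑ n, (s m * s n) * (c m ⬝ᵥ W *ᵥ c n) := by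
  have hh : ∀ u : Fin M' → ℝ, (∑ m, s m • c m) ⬝ᵥ W *ᵥ u = ∑ m, s m * (c m ⬝ᵥ W *ᵥ u) := by
    intro u
    rw [sumdot]
    exact Finset.sum_congr rfl fun m _ => by rw [smul_dotProduct]; rfl
  rw [sub_dotProduct, mulVec_sub, dotProduct_sub, dotProduct_sub,
    dotsymm W hWs e (∑ m, s m • c m), hh, hh]
  have h2 : ∀ m, c m ⬝ᵥ W *ᵥ (∑ n, s n • c n) = ∑ n, s n * (c n ⬝ᵥ W *ᵥ c m) := by
    intro m
    rw [dotsymm W hWs, hh]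
  simp only [h2]
  have h3 : ∑ m, s m * ∑ n, s n * (c n ⬝ᵥ W *ᵥ c m)
      = ∑ m, ∑ n, (s m * s n) * (c m ⬝ᵥ W *ᵥ c n) := by
    rw [Finset.sum_comm]
    exact Finset.sum_congr rfl fun n _ => by
      rw [Finset.mul_sum]
      exact Finset.sum_congr rfl fun m _ => by ring
  rw [h3]
  ring

/-- **Theorem 1 (LU-CBTB) for a fixed set of test points.**
If the estimator `g` is absolutely integrable against every density `f m`, has a finite
weighted second moment under `f 0`, and satisfies the pointwise C-unbiasedness conditions
`Uₘᵀ W (∫ (g − θₘ) fₘ dμ) = 0` for all `m`, and if the matrix `D` is invertible, then the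
weighted mean-squared error satisfies `∫ (g − θ₀)ᵀ W (g − θ₀) f₀ dμ ≥ tᵀ D⁻¹ t`. -/
theorem lu_cbtb_fixed_test_points
    {Ω : Type*} [MeasurableSpace Ω] (μ : Measure Ω)
    (M K P : ℕ) (hK : 0 < K) (hKM : K < M) (hP : 1 ≤ P)
    (f : Fin (P + 1) → Ω → ℝ)
    (hf_meas : ∀ m, Measurable (f m))
    (hf_nonneg : ∀ m x, 0 ≤ f m x)
    (hf_int : ∀ m, Integrable (f m) μ)
    (hf_one : ∀ m, ∫ x, f m x ∂μ = 1)
    (hf0_pos : ∀ᵐ x ∂μ, 0 < f 0 x)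
    (B : Matrix (Fin (P + 1)) (Fin (P + 1)) ℝ)
    (hB : ∀ m n, B m n = ∫ x, f m x * f n x / f 0 x ∂μ)
    (hB_fin : ∀ m n, Integrable (fun x => f m x * f n x / f 0 x) μ)
    (θ : Fin (P + 1) → Fin M → ℝ)
    (W : Matrix (Fin M) (Fin M) ℝ) (hW : W.PosSemidef)
    (U : Fin (P + 1) → Matrix (Fin M) (Fin (M - K)) ℝ)
    (D : Matrix (Fin (P + 1) × Fin (M - K)) (Fin (P + 1) × Fin (M - K)) ℝ)
    (hD : ∀ m n i j, D (m, i) (n, j) = ((U m)ᵀ * W * U n) i j * B m n)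
    (t : Fin (P + 1) × Fin (M - K) → ℝ)
    (ht : ∀ m i, t (m, i) = (U m)ᵀ.mulVec (W.mulVec (fun k => θ m k - θ 0 k)) i)
    (g : Ω → Fin M → ℝ) (hg_meas : Measurable g)
    (hg_int1 : ∀ m, Integrable (fun x => ‖g x‖ * f m x) μ)
    (hg_int2 : Integrable (fun x => ‖g x - θ 0‖ ^ 2 * f 0 x) μ)
    (hg_cunbiased : ∀ m, (U m)ᵀ.mulVec (W.mulVec (∫ x, f m x • (g x - θ m) ∂μ)) = 0)
    (hD_inv : IsUnit D.det) :
    ∫ x, f 0 x * ((g x - θ 0) ⬝ᵥ W.mulVec (g x - θ 0)) ∂μ ≥ t ⬝ᵥ D⁻¹.mulVec t := by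
  classical
  have hWs : Wᵀ = W := by
    have := hW.1
    simpa [Matrix.IsHermitian] using this
  have hgk : ∀ k, Measurable fun x => g x k := fun k => (measurable_pi_apply k).comp hg_meas
  -- main players
  set a : Fin (P + 1) × Fin (M - K) → ℝ := D⁻¹ *ᵥ t with ha
  set c : Fin (P + 1) → Fin M → ℝ := fun m => (U m) *ᵥ (fun i => a (m, i)) with hc
  set τ : ℝ := t ⬝ᵥ D⁻¹ *ᵥ t with hτ
  have fact1 : a ⬝ᵥ t = τ := dotProduct_comm _ _
  have fact2 : a ⬝ᵥ D *ᵥ a = τ := by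
    rw [ha, mulVec_mulVec, Matrix.mul_nonsing_inv D hD_inv, one_mulVec]
    exact dotProduct_comm _ _
  -- the four integrands
  set X : Ω → ℝ := fun x => f 0 x * ((g x - θ 0) ⬝ᵥ W *ᵥ (g x - θ 0)) with hX
  set Y : Ω → ℝ := fun x => ∑ m, f m x * (c m ⬝ᵥ W *ᵥ (g x - θ 0)) with hY
  set Z : Ω → ℝ := fun x => ∑ m, ∑ n, (f m x * f n x / f 0 x) * (c m ⬝ᵥ W *ᵥ c n) with hZ
  set Φ : Ω → ℝ := fun x => f 0 x *
      ((g x - θ 0 - ∑ m, (f m x / f 0 x) • c m) ⬝ᵥ W *ᵥ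
        (g x - θ 0 - ∑ m, (f m x / f 0 x) • c m)) with hΦ
  -- pointwise nonnegativity
  have hΦ_nonneg : ∀ x, 0 ≤ Φ x := by
    intro x
    refine mul_nonneg (hf_nonneg 0 x) ?_
    simpa using hW.dotProduct_mulVec_nonneg (g x - θ 0 - ∑ m, (f m x / f 0 x) • c m)
  -- a.e. identity Φ = X - 2 Y + Z
  have hae : Φ =ᵐ[μ] fun x => X x - 2 * Y x + Z x := by
    filter_upwards [hf0_pos] with x hx
    have hx0 : f 0 x ≠ 0 := ne_of_gt hx
    simp only [hΦ, hX, hY, hZ]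
    have step1 : (g x - θ 0 - ∑ m, (f m x / f 0 x) • c m) ⬝ᵥ W *ᵥ
        (g x - θ 0 - ∑ m, (f m x / f 0 x) • c m)
        = (g x - θ 0) ⬝ᵥ W *ᵥ (g x - θ 0)
          - 2 * ∑ m, (f m x / f 0 x) * (c m ⬝ᵥ W *ᵥ (g x - θ 0))
          + ∑ m, ∑ n, (f m x / f 0 x * (f n x / f 0 x)) * (c m ⬝ᵥ W *ᵥ c n) :=
      expand_quad W hWs _ c _
    have e1 : f 0 x * ∑ m, (f m x / f 0 x) * (c m ⬝ᵥ W *ᵥ (g x - θ 0))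
        = ∑ m, f m x * (c m ⬝ᵥ W *ᵥ (g x - θ 0)) := by
      rw [Finset.mul_sum]
      refine Finset.sum_congr rfl fun m _ => ?_
      field_simp
    have e2 : f 0 x * ∑ m, ∑ n, (f m x / f 0 x * (f n x / f 0 x)) * (c m ⬝ᵥ W *ᵥ c n)
        = ∑ m, ∑ n, (f m x * f n x / f 0 x) * (c m ⬝ᵥ W *ᵥ c n) := by
      rw [Finset.mul_sum]
      refine Finset.sum_congr rfl fun m _ => ?_
      rw [Finset.mul_sum]
      refine Finset.sum_congr rfl fun n _ => ?_
      field_simp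
    rw [step1, mul_add, mul_sub, e2]
    congr 1
    congr 1
    rw [← e1]
    ring
  -- measurability of the quadratic form
  have hq_meas : Measurable fun x => (g x - θ 0) ⬝ᵥ W *ᵥ (g x - θ 0) := by
    simp only [dotProduct, mulVec, Pi.sub_apply]
    exact Finset.measurable_sum _ fun k _ =>
      ((hgk k).sub measurable_const).mul <|
        Finset.measurable_sum _ fun l _ => measurable_const.mul ((hgk l).sub measurable_const)
  -- bound on bilinear forms
  have hqb : ∀ u v : Fin M → ℝ, |u ⬝ᵥ W *ᵥ v| ≤ (∑ k, ∑ l, |W k l|) * (‖u‖ * ‖v‖) := by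
    intro u v
    rw [show u ⬝ᵥ W *ᵥ v = ∑ k, u k * ∑ l, W k l * v l from by simp [dotProduct, mulVec]]
    calc |∑ k, u k * ∑ l, W k l * v l| ≤ ∑ k, |u k * ∑ l, W k l * v l| :=
          Finset.abs_sum_le_sum_abs _ _
      _ ≤ ∑ k, ∑ l, |u k| * (|W k l| * |v l|) := by
          refine Finset.sum_le_sum fun k _ => ?_
          rw [abs_mul]
          calc |u k| * |∑ l, W k l * v l| ≤ |u k| * ∑ l, |W k l * v l| := by
                have := Finset.abs_sum_le_sum_abs (fun l => W k l * v l) Finset.univ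
                exact mul_le_mul_of_nonneg_left this (abs_nonneg _)
            _ = ∑ l, |u k| * (|W k l| * |v l|) := by
                rw [Finset.mul_sum]
                exact Finset.sum_congr rfl fun l _ => by rw [abs_mul]
      _ ≤ ∑ k, ∑ l, ‖u‖ * (|W k l| * ‖v‖) := by
          refine Finset.sum_le_sum fun k _ => Finset.sum_le_sum fun l _ => ?_
          have h1 : |u k| ≤ ‖u‖ := by simpa [Real.norm_eq_abs] using norm_le_pi_norm u k
          have h2 : |v l| ≤ ‖v‖ := by simpa [Real.norm_eq_abs] using norm_le_pi_norm v l
          have := mul_le_mul (le_refl |W k l|) h2 (abs_nonneg _) (abs_nonneg _)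
          exact mul_le_mul h1 this (by positivity) (norm_nonneg _)
      _ = (∑ k, ∑ l, |W k l|) * (‖u‖ * ‖v‖) := by
          rw [Finset.sum_mul]
          refine Finset.sum_congr rfl fun k _ => ?_
          rw [Finset.sum_mul]
          refine Finset.sum_congr rfl fun l _ => ?_
          ring
  -- integrability of X
  have hXint : Integrable X μ := by
    refine Integrable.mono' (hg_int2.const_mul (∑ k, ∑ l, |W k l|))
      ((hf_meas 0).mul hq_meas).aestronglyMeasurable ?_
    filter_upwards with x
    rw [Real.norm_eq_abs, abs_mul, abs_of_nonneg (hf_nonneg 0 x)]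
    have := hqb (g x - θ 0) (g x - θ 0)
    rw [← pow_two] at this
    calc f 0 x * |(g x - θ 0) ⬝ᵥ W *ᵥ (g x - θ 0)|
        ≤ f 0 x * ((∑ k, ∑ l, |W k l|) * ‖g x - θ 0‖ ^ 2) :=
          mul_le_mul_of_nonneg_left this (hf_nonneg 0 x)
      _ = (∑ k, ∑ l, |W k l|) * (‖g x - θ 0‖ ^ 2 * f 0 x) := by ring
  -- componentwise integrability
  have hψ_int : ∀ m (l : Fin M) (r : ℝ), Integrable (fun x => f m x * (g x l - r)) μ := by
    intro m l r
    have hmeas : Measurable fun x => f m x * (g x l - r) :=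
      (hf_meas m).mul ((hgk l).sub measurable_const)
    refine Integrable.mono' ((hg_int1 m).add ((hf_int m).const_mul |r|))
      hmeas.aestronglyMeasurable ?_
    filter_upwards with x
    simp only [Pi.add_apply]
    rw [Real.norm_eq_abs, abs_mul, abs_of_nonneg (hf_nonneg m x)]
    have h1 : |g x l - r| ≤ ‖g x‖ + |r| := by
      have h2 : |g x l| ≤ ‖g x‖ := by simpa [Real.norm_eq_abs] using norm_le_pi_norm (g x) l
      calc |g x l - r| ≤ |g x l| + |r| := by
            simpa [Real.norm_eq_abs] using norm_sub_le (g x l) r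
        _ ≤ ‖g x‖ + |r| := by linarith
    nlinarith [mul_le_mul_of_nonneg_left h1 (hf_nonneg m x)]
  -- integrability of the vector-valued integrand
  have hv_int : ∀ m, Integrable (fun x => f m x • (g x - θ m)) μ := by
    intro m
    have hmeas : Measurable fun x => f m x • (g x - θ m) := by
      apply measurable_pi_lambda
      intro k
      exact (hf_meas m).mul ((hgk k).sub measurable_const)
    refine Integrable.mono' ((hg_int1 m).add ((hf_int m).const_mul ‖θ m‖))
      hmeas.aestronglyMeasurable ?_
    filter_upwards with x
    simp only [Pi.add_apply]
    rw [norm_smul, Real.norm_eq_abs, abs_of_nonneg (hf_nonneg m x)]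
    have h1 : ‖g x - θ m‖ ≤ ‖g x‖ + ‖θ m‖ := norm_sub_le _ _
    nlinarith [mul_le_mul_of_nonneg_left h1 (hf_nonneg m x)]
  -- components of the vector integral
  have hv_comp : ∀ m (l : Fin M),
      (∫ x, f m x • (g x - θ m) ∂μ) l = ∫ x, f m x * (g x l - θ m l) ∂μ := by
    intro m l
    have h := (ContinuousLinearMap.proj (R := ℝ) (φ := fun _ : Fin M => ℝ) l).integral_comp_comm
      (hv_int m)
    simpa [ContinuousLinearMap.proj_apply, Pi.smul_apply, Pi.sub_apply, smul_eq_mul] using h.symm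
  -- value of each Y-term
  have hYterm_eq : ∀ m, (fun x => f m x * (c m ⬝ᵥ W *ᵥ (g x - θ 0)))
      = fun x => ∑ k, ∑ l, (c m k * W k l) * (f m x * (g x l - θ 0 l)) := by
    intro m
    funext x
    simp only [dotProduct, mulVec, Pi.sub_apply]
    rw [Finset.mul_sum]
    refine Finset.sum_congr rfl fun k _ => ?_
    rw [Finset.mul_sum, Finset.mul_sum]
    refine Finset.sum_congr rfl fun l _ => ?_
    ring
  have hYterm_int : ∀ m, Integrable (fun x => f m x * (c m ⬝ᵥ W *ᵥ (g x - θ 0))) μ := by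
    intro m
    rw [hYterm_eq m]
    exact integrable_finset_sum _ fun k _ => integrable_finset_sum _ fun l _ =>
      (hψ_int m l _).const_mul _
  have hint_e : ∀ m (l : Fin M),
      ∫ x, f m x * (g x l - θ 0 l) ∂μ
        = (∫ x, f m x * (g x l - θ m l) ∂μ) + (θ m l - θ 0 l) := by
    intro m l
    have heq : (fun x => f m x * (g x l - θ 0 l))
        = fun x => f m x * (g x l - θ m l) + (θ m l - θ 0 l) * f m x := by
      funext x; ring
    rw [heq, integral_add (hψ_int m l (θ m l)) ((hf_int m).const_mul _), integral_const_mul,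
      hf_one m, mul_one]
  have hYterm_val : ∀ m, ∫ x, f m x * (c m ⬝ᵥ W *ᵥ (g x - θ 0)) ∂μ
      = ∑ i, a (m, i) * t (m, i) := by
    intro m
    rw [hYterm_eq m,
      integral_finset_sum _ (fun k _ => integrable_finset_sum _ fun l _ =>
        (hψ_int m l _).const_mul _)]
    have step : ∀ k, ∫ x, ∑ l, (c m k * W k l) * (f m x * (g x l - θ 0 l)) ∂μ
        = ∑ l, (c m k * W k l) *
            ((∫ x, f m x * (g x l - θ m l) ∂μ) + (θ m l - θ 0 l)) := by
      intro k
      rw [integral_finset_sum _ fun l _ => (hψ_int m l _).const_mul _]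
      exact Finset.sum_congr rfl fun l _ => by rw [integral_const_mul, hint_e m l]
    simp only [step]
    -- fold back into matrix form
    have hfold : ∑ k, ∑ l, (c m k * W k l) *
        ((∫ x, f m x * (g x l - θ m l) ∂μ) + (θ m l - θ 0 l))
        = c m ⬝ᵥ W *ᵥ (fun l => (∫ x, f m x * (g x l - θ m l) ∂μ) + (θ m l - θ 0 l)) := by
      simp only [dotProduct, mulVec]
      refine Finset.sum_congr rfl fun k _ => ?_
      rw [Finset.mul_sum]
      refine Finset.sum_congr rfl fun l _ => ?_
      ring
    rw [hfold]
    have hw : (fun l => (∫ x, f m x * (g x l - θ m l) ∂μ) + (θ m l - θ 0 l))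
        = (∫ x, f m x • (g x - θ m) ∂μ) + fun k => θ m k - θ 0 k := by
      funext l
      simp [hv_comp m l]
    rw [hw, hc]
    rw [dotadj (U m) (fun i => a (m, i)) _]
    rw [mulVec_add, mulVec_add, hg_cunbiased m, zero_add]
    simp only [dotProduct]
    exact Finset.sum_congr rfl fun i _ => by rw [ht m i]
  -- integrability of Y and Z
  have hYint : Integrable Y μ := by
    simp only [hY]
    exact integrable_finset_sum _ fun m _ => hYterm_int m
  have hZint : Integrable Z μ := by
    simp only [hZ]
    exact integrable_finset_sum _ fun m _ => integrable_finset_sum _ fun n _ =>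
      (hB_fin m n).mul_const _
  -- value of ∫ Y
  have hYval : ∫ x, Y x ∂μ = τ := by
    simp only [hY]
    rw [integral_finset_sum _ fun m _ => hYterm_int m]
    rw [← fact1]
    rw [show a ⬝ᵥ t = ∑ m, ∑ i, a (m, i) * t (m, i) from by
      simp [dotProduct, Fintype.sum_prod_type]]
    exact Finset.sum_congr rfl fun m _ => hYterm_val m
  -- value of ∫ Z
  have key : ∀ m n, c m ⬝ᵥ W *ᵥ c n
      = ∑ i, ∑ j, a (m, i) * (((U m)ᵀ * W * U n) i j * a (n, j)) := by
    intro m n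
    rw [hc]
    rw [dotadj (U m) (fun i => a (m, i)) _, mulVec_mulVec, mulVec_mulVec]
    simp only [dotProduct, mulVec]
    refine Finset.sum_congr rfl fun i _ => ?_
    rw [Finset.mul_sum]
  have hZval : ∫ x, Z x ∂μ = τ := by
    simp only [hZ]
    rw [integral_finset_sum _ fun m _ => integrable_finset_sum _ fun n _ =>
      (hB_fin m n).mul_const _]
    have hstep : ∀ m, ∫ x, ∑ n, (f m x * f n x / f 0 x) * (c m ⬝ᵥ W *ᵥ c n) ∂μ
        = ∑ n, B m n * (c m ⬝ᵥ W *ᵥ c n) := by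
      intro m
      rw [integral_finset_sum _ fun n _ => (hB_fin m n).mul_const _]
      refine Finset.sum_congr rfl fun n _ => ?_
      rw [integral_mul_const, hB m n]
    simp only [hstep]
    rw [← fact2]
    have expand : a ⬝ᵥ D *ᵥ a
        = ∑ m, ∑ i, a (m, i) * ∑ n, ∑ j, (((U m)ᵀ * W * U n) i j * B m n) * a (n, j) := by
      simp only [dotProduct, mulVec, Fintype.sum_prod_type, hD]
    rw [expand]
    refine Finset.sum_congr rfl fun m _ => ?_
    calc ∑ n, B m n * (c m ⬝ᵥ W *ᵥ c n)
        = ∑ n, ∑ i, ∑ j, B m n * (a (m, i) * (((U m)ᵀ * W * U n) i j * a (n, j))) := by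
          refine Finset.sum_congr rfl fun n _ => ?_
          rw [key m n, Finset.mul_sum]
          exact Finset.sum_congr rfl fun i _ => by rw [Finset.mul_sum]
      _ = ∑ i, ∑ n, ∑ j, B m n * (a (m, i) * (((U m)ᵀ * W * U n) i j * a (n, j))) :=
          Finset.sum_comm
      _ = ∑ i, a (m, i) * ∑ n, ∑ j, (((U m)ᵀ * W * U n) i j * B m n) * a (n, j) := by
          refine Finset.sum_congr rfl fun i _ => ?_
          rw [Finset.mul_sum]
          refine Finset.sum_congr rfl fun n _ => ?_
          rw [Finset.mul_sum]
          exact Finset.sum_congr rfl fun j _ => by ring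
  -- assemble
  have h0 : 0 ≤ ∫ x, Φ x ∂μ := integral_nonneg hΦ_nonneg
  have hsplit : ∫ x, Φ x ∂μ = (∫ x, X x ∂μ) - 2 * (∫ x, Y x ∂μ) + ∫ x, Z x ∂μ := by
    have hcongr : ∫ x, Φ x ∂μ = ∫ x, (X x - 2 * Y x + Z x) ∂μ := integral_congr_ae hae
    have h2 : Integrable (fun x => 2 * Y x) μ := hYint.const_mul 2
    have h12 : Integrable (fun x => X x - 2 * Y x) μ := hXint.sub h2
    rw [hcongr, integral_add h12 hZint, integral_sub hXint h2, integral_const_mul]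
  show ∫ x, X x ∂μ ≥ τ
  rw [hYval, hZval] at hsplit
  linarith
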